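/- For every A > 0 and α ∈ (0,1) and every real t > 0, ∫₀^∞ e^{Ax^α − tx} dx = (1/t) Σ_{k=0}^∞ (A/t^α)^k Γ(αk+1)/Γ(k+1), where the series converges absolutely. Moreover, for every δ > 0, sup over complex z with Re(z) > 0 and |z| ≥ δ of |∫₀^∞ e^{Ax^α} e^{-zx} dx| is finite. -/

import Mathlib

open MeasureTheory Set Complex Filter


lemma gammaConv {α : ℝ} (hα : 0 < α) (hα1 : α < 1) {x : ℝ} (hx : 1 ≤ x) :
    Real.Gamma (x + α) ≤ Real.Gamma x * x ^ α := by
  have hx0 : (0:ℝ) < x := lt_of_lt_of_le one_pos hx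
  have h1 : (0:ℝ) < Real.Gamma x := Real.Gamma_pos_of_pos hx0
  have key := Real.convexOn_log_Gamma.2 (mem_Ioi.2 hx0) (mem_Ioi.2 (by linarith : (0:ℝ) < x + 1))
    (by linarith : (0:ℝ) ≤ 1 - α) hα.le (by ring)
  have hcomb : (1 - α) • x + α • (x + 1) = x + α := by simp [smul_eq_mul]; ring
  rw [hcomb] at key
  simp only [Function.comp_apply, smul_eq_mul] at key
  have hG1 : Real.Gamma (x + 1) = x * Real.Gamma x := Real.Gamma_add_one hx0.ne'
  have hlog : Real.log (Real.Gamma (x+1)) = Real.log x + Real.log (Real.Gamma x) := by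
    rw [hG1, Real.log_mul hx0.ne' h1.ne']
  have key2 : Real.log (Real.Gamma (x + α)) ≤ Real.log (Real.Gamma x) + α * Real.log x := by
    rw [hlog] at key; nlinarith
  have hGpos : (0:ℝ) < Real.Gamma (x + α) := Real.Gamma_pos_of_pos (by linarith)
  calc Real.Gamma (x + α) = Real.exp (Real.log (Real.Gamma (x+α))) := (Real.exp_log hGpos).symm
    _ ≤ Real.exp (Real.log (Real.Gamma x) + α * Real.log x) := Real.exp_le_exp.2 key2
    _ = Real.Gamma x * x ^ α := by
        rw [Real.exp_add, Real.exp_log h1, Real.rpow_def_of_pos hx0, mul_comm α]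

lemma summableAux {α : ℝ} (hα : 0 < α) (hα1 : α < 1) {r : ℝ} (hr : 0 ≤ r) :
    Summable (fun k : ℕ => r ^ k * (Real.Gamma (α * k + 1) / (k.factorial : ℝ))) := by
  apply summable_of_ratio_norm_eventually_le (r := 1/2) (by norm_num)
  have htend : Filter.Tendsto (fun k : ℕ => r * ((k:ℝ) + 1) ^ (α - 1)) Filter.atTop (nhds 0) := by
    have h1 : Filter.Tendsto (fun k : ℕ => ((k:ℝ) + 1)) Filter.atTop Filter.atTop :=
      Filter.tendsto_atTop_add_const_right _ 1 tendsto_natCast_atTop_atTop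
    have h2 : Filter.Tendsto (fun k : ℕ => ((k:ℝ) + 1) ^ (α - 1)) Filter.atTop (nhds 0) := by
      have := (tendsto_rpow_neg_atTop (by linarith : (0:ℝ) < 1 - α)).comp h1
      simpa [neg_sub, Function.comp_def] using this
    simpa using h2.const_mul r
  have hev : ∀ᶠ k : ℕ in Filter.atTop, r * ((k:ℝ) + 1) ^ (α - 1) ≤ 1/2 :=
    htend.eventually (eventually_le_nhds (by norm_num))
  filter_upwards [hev] with k hk
  have hkpos : (0:ℝ) < (k:ℝ) + 1 := by positivity
  have hx1 : (1:ℝ) ≤ α * k + 1 := by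
    have : (0:ℝ) ≤ α * k := by positivity
    linarith
  have hG := gammaConv hα hα1 hx1
  have hble : (α * k + 1) ^ α ≤ ((k:ℝ) + 1) ^ α := by
    apply Real.rpow_le_rpow (by positivity) _ hα.le
    nlinarith [Nat.cast_nonneg (α := ℝ) k]
  have hGk : (0:ℝ) < Real.Gamma (α * k + 1) := Real.Gamma_pos_of_pos (by positivity)
  have harg : α * (k+1 : ℕ) + 1 = (α * k + 1) + α := by push_cast; ring
  rw [harg]
  have hfac : ((k+1 : ℕ).factorial : ℝ) = ((k:ℝ)+1) * (k.factorial : ℝ) := by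
    rw [Nat.factorial_succ]; push_cast; ring
  have hfacpos : (0:ℝ) < (k.factorial : ℝ) := by positivity
  have key : Real.Gamma ((α * k + 1) + α) ≤ Real.Gamma (α * k + 1) * ((k:ℝ)+1) ^ α :=
    (gammaConv hα hα1 hx1).trans (by nlinarith)
  rw [Real.norm_eq_abs, Real.norm_eq_abs, _root_.abs_of_nonneg (by positivity), _root_.abs_of_nonneg (by positivity)]
  rw [hfac, pow_succ]
  have hrp : ((k:ℝ)+1) ^ α = ((k:ℝ)+1) * ((k:ℝ)+1)^(α-1) := by
    rw [← Real.rpow_one_add' (by positivity) (by intro h; nlinarith)]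
    ring_nf
  calc r ^ k * r * (Real.Gamma ((α*k+1)+α) / (((k:ℝ)+1) * (k.factorial:ℝ)))
      ≤ r ^ k * r * (Real.Gamma (α*k+1) * ((k:ℝ)+1)^α / (((k:ℝ)+1) * (k.factorial:ℝ))) := by
        apply mul_le_mul_of_nonneg_left _ (by positivity)
        apply div_le_div_of_nonneg_right key (by positivity) |>.trans_eq rfl
    _ = (r * ((k:ℝ)+1)^(α-1)) * (r ^ k * (Real.Gamma (α*k+1) / (k.factorial:ℝ))) := by
        rw [hrp]; field_simp
    _ ≤ (1/2) * (r ^ k * (Real.Gamma (α*k+1) / (k.factorial:ℝ))) := by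
        apply mul_le_mul_of_nonneg_right hk (by positivity)



lemma intAux {s c : ℝ} (hs : -1 < s) (hc : 0 < c) :
    IntegrableOn (fun x : ℝ => x ^ s * Real.exp (-(c * x))) (Ioi 0) := by
  have := integrableOn_rpow_mul_exp_neg_mul_rpow hs one_pos hc
  simpa [Real.rpow_one, neg_mul] using this

lemma contBase {s : ℝ} (hs : 0 ≤ s) : Continuous (fun x : ℝ => ((x ^ s : ℝ) : ℂ)) := by
  apply Complex.continuous_ofReal.comp
  rw [continuous_iff_continuousAt]
  exact fun x => Real.continuousAt_rpow_const x s (Or.inr hs)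

lemma contAux {s : ℝ} (hs : 0 ≤ s) (z : ℂ) :
    Continuous (fun x : ℝ => ((x ^ s : ℝ) : ℂ) * Complex.exp (-(z * x))) :=
  (contBase hs).mul (Complex.continuous_exp.comp (by continuity))

lemma normAux {s : ℝ} (z : ℂ) {x : ℝ} (hx : 0 < x) :
    ‖((x ^ s : ℝ) : ℂ) * Complex.exp (-(z * x))‖ = x ^ s * Real.exp (-(z.re * x)) := by
  rw [norm_mul, Complex.norm_exp, Complex.norm_real, Real.norm_eq_abs,
    _root_.abs_of_nonneg (Real.rpow_nonneg hx.le s)]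
  congr 1
  simp

lemma cIntAux {s : ℝ} (hs : 0 ≤ s) {z : ℂ} (hz : 0 < z.re) :
    IntegrableOn (fun x : ℝ => ((x ^ s : ℝ) : ℂ) * Complex.exp (-(z * x))) (Ioi 0) := by
  apply Integrable.mono' (intAux (s := s) (by linarith) hz)
    ((contAux hs z).aestronglyMeasurable.restrict)
  filter_upwards [ae_restrict_mem measurableSet_Ioi] with x hx
  rw [normAux z hx]

lemma diffAux {s : ℝ} (hs : 0 ≤ s) :
    DifferentiableOn ℂ
      (fun z : ℂ => ∫ x in Ioi (0:ℝ), ((x ^ s : ℝ) : ℂ) * Complex.exp (-(z * x)))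
      {z : ℂ | 0 < z.re} := by
  intro z₀ hz₀
  simp only [mem_setOf_eq] at hz₀
  set ε := z₀.re / 2 with hε
  have hεpos : 0 < ε := by positivity
  have key := hasDerivAt_integral_of_dominated_loc_of_deriv_le (μ := volume.restrict (Ioi (0:ℝ)))
    (F := fun z x => ((x ^ s : ℝ) : ℂ) * Complex.exp (-(z * x)))
    (F' := fun z x => ((x ^ s : ℝ) : ℂ) * (Complex.exp (-(z * x)) * (-(x:ℂ))))
    (x₀ := z₀) (bound := fun x => x ^ (s+1) * Real.exp (-(ε * x))) (Metric.ball_mem_nhds z₀ hεpos)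
    (Filter.Eventually.of_forall fun z => (contAux hs z).aestronglyMeasurable.restrict)
    (cIntAux hs hz₀)
    (by
      apply Continuous.aestronglyMeasurable ?_ |>.restrict
      exact (contBase hs).mul ((Complex.continuous_exp.comp (by continuity)).mul
        (Complex.continuous_ofReal.neg))
      )
    (by
      filter_upwards [ae_restrict_mem measurableSet_Ioi] with x hx z hzball
      rw [mem_Ioi] at hx
      have hre : ε ≤ z.re := by
        have h1 : |z.re - z₀.re| ≤ ‖z - z₀‖ := by
          simpa [Complex.sub_re] using Complex.abs_re_le_norm (z - z₀)
        have h2 : ‖z - z₀‖ < ε := by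
          simpa [Complex.dist_eq] using Metric.mem_ball.1 hzball
        have := abs_sub_lt_iff.1 (lt_of_le_of_lt h1 h2)
        simp only [hε] at *; linarith [this.2]
      have hnorm : ‖((x ^ s : ℝ) : ℂ) * (Complex.exp (-(z * x)) * (-(x:ℂ)))‖
          = x ^ s * (Real.exp (-(z.re * x)) * x) := by
        rw [norm_mul, norm_mul,
          Complex.norm_exp, Complex.norm_real, Real.norm_eq_abs, _root_.abs_of_nonneg (Real.rpow_nonneg hx.le s),
          show (-(z * (x:ℂ))).re = -(z.re * x) by simp,
          show ‖-(x:ℂ)‖ = x by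
            rw [norm_neg, Complex.norm_real, Real.norm_eq_abs, _root_.abs_of_nonneg hx.le]]
      rw [hnorm]
      have hpow : x ^ (s+1) = x ^ s * x := Real.rpow_add_one hx.ne' s
      have hexp : Real.exp (-(z.re * x)) ≤ Real.exp (-(ε * x)) := by
        apply Real.exp_le_exp.2
        nlinarith
      rw [hpow]
      have h5 : (0:ℝ) ≤ x ^ s := Real.rpow_nonneg hx.le s
      calc x ^ s * (Real.exp (-(z.re * x)) * x)
          ≤ x ^ s * (Real.exp (-(ε * x)) * x) := by
            apply mul_le_mul_of_nonneg_left _ h5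
            exact mul_le_mul_of_nonneg_right hexp hx.le
        _ = x ^ s * x * Real.exp (-(ε * x)) := by ring)
    (intAux (s := s + 1) (by linarith) hεpos)
    (by
      filter_upwards [ae_restrict_mem measurableSet_Ioi] with x hx z hzball
      have h1 : HasDerivAt (fun z : ℂ => -(z * x)) (-(x:ℂ)) z := by
        exact (hasDerivAt_mul_const (x:ℂ)).neg
      simpa using (h1.cexp.const_mul (((x ^ s : ℝ) : ℂ))))
  exact key.2.differentiableAt.differentiableWithinAt


lemma realEq {s : ℝ} (hs : 0 ≤ s) {r : ℝ} (hr : 0 < r) :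
    ∫ x in Ioi (0:ℝ), ((x ^ s : ℝ) : ℂ) * Complex.exp (-((r:ℂ) * x))
      = (Real.Gamma (s+1) : ℂ) * (r:ℂ) ^ ((-(s+1) : ℝ) : ℂ) := by
  have h1 : ∀ x : ℝ, ((x ^ s : ℝ) : ℂ) * Complex.exp (-((r:ℂ) * x))
      = ((x ^ s * Real.exp (-(r * x)) : ℝ) : ℂ) := by
    intro x
    rw [Complex.ofReal_mul, Complex.ofReal_exp, Complex.ofReal_neg, Complex.ofReal_mul]
  simp_rw [h1]
  rw [show (∫ x in Ioi (0:ℝ), ((x ^ s * Real.exp (-(r * x)) : ℝ) : ℂ))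
      = ((∫ x in Ioi (0:ℝ), x ^ s * Real.exp (-(r * x)) : ℝ) : ℂ) from integral_ofReal]
  have h2 : ∫ x in Ioi (0:ℝ), x ^ s * Real.exp (-(r * x)) = (1/r) ^ (s+1) * Real.Gamma (s+1) := by
    have := Real.integral_rpow_mul_exp_neg_mul_Ioi (by linarith : (0:ℝ) < s + 1) hr
    simpa using this
  rw [h2]
  rw [Complex.ofReal_mul, ← Complex.ofReal_cpow hr.le]
  rw [show (1/r) ^ (s+1) = r ^ (-(s+1)) by
    rw [Real.rpow_neg hr.le, one_div, Real.inv_rpow hr.le]]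
  ring

lemma lemH {s : ℝ} (hs : 0 ≤ s) {z : ℂ} (hz : 0 < z.re) :
    ∫ x in Ioi (0:ℝ), ((x ^ s : ℝ) : ℂ) * Complex.exp (-(z * x))
      = (Real.Gamma (s+1) : ℂ) * z ^ ((-(s+1) : ℝ) : ℂ) := by
  set U : Set ℂ := {z : ℂ | 0 < z.re} with hU
  have hopen : IsOpen U := isOpen_lt continuous_const Complex.continuous_re
  have hf : AnalyticOnNhd ℂ
      (fun z : ℂ => ∫ x in Ioi (0:ℝ), ((x ^ s : ℝ) : ℂ) * Complex.exp (-(z * x))) U :=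
    (diffAux hs).analyticOnNhd hopen
  have hg : AnalyticOnNhd ℂ (fun z : ℂ => (Real.Gamma (s+1) : ℂ) * z ^ ((-(s+1) : ℝ) : ℂ)) U := by
    apply DifferentiableOn.analyticOnNhd _ hopen
    intro w hw
    have : DifferentiableAt ℂ (fun z : ℂ => (Real.Gamma (s+1) : ℂ) * z ^ ((-(s+1) : ℝ) : ℂ)) w := by
      apply DifferentiableAt.const_mul
      exact ((hasDerivAt_id w).cpow_const (Or.inl hw)).differentiableAt
    exact this.differentiableWithinAt
  have hpre : IsPreconnected U := (convex_halfSpace_re_gt 0).isPreconnected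
  have h1mem : (1:ℂ) ∈ U := by simp [hU]
  have hfreq : ∃ᶠ w in nhdsWithin (1:ℂ) {(1:ℂ)}ᶜ, (∫ x in Ioi (0:ℝ),
      ((x ^ s : ℝ) : ℂ) * Complex.exp (-(w * x)))
        = (Real.Gamma (s+1) : ℂ) * w ^ ((-(s+1) : ℝ) : ℂ) := by
    have htu : Tendsto (fun n : ℕ => ((1 + 1/((n:ℝ)+1) : ℝ) : ℂ)) atTop
        (nhdsWithin (1:ℂ) {(1:ℂ)}ᶜ) := by
      apply tendsto_nhdsWithin_of_tendsto_nhds_of_eventually_within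
      · have : Tendsto (fun n : ℕ => (1 + 1/((n:ℝ)+1) : ℝ)) atTop (nhds 1) := by
          simpa using (tendsto_one_div_add_atTop_nhds_zero_nat (𝕜 := ℝ)).const_add 1
        have h4 := (Complex.continuous_ofReal.tendsto 1).comp this
        simp only [Function.comp_def] at h4
        simpa using h4
      · apply Eventually.of_forall
        intro n
        simp only [mem_compl_iff, mem_singleton_iff]
        intro h
        have : (1 + 1/((n:ℝ)+1) : ℝ) = 1 := by exact_mod_cast h
        have hpos : (0:ℝ) < 1/((n:ℝ)+1) := by positivity
        linarith
    apply htu.frequently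
    apply Frequently.of_forall
    intro n
    exact realEq hs (by positivity)
  exact hf.eqOn_of_preconnected_of_frequently_eq hg hpre h1mem hfreq hz


lemma master {A : ℝ} (hA : 0 < A) {α : ℝ} (hα : 0 < α) (hα1 : α < 1) {z : ℂ} (hz : 0 < z.re) :
    ∫ x in Ioi (0:ℝ), ((Real.exp (A * x ^ α) : ℝ) : ℂ) * Complex.exp (-z * (x:ℂ))
      = ∑' k : ℕ, ((A ^ k / k.factorial * Real.Gamma (α * k + 1) : ℝ) : ℂ)
          * z ^ ((-(α * k + 1) : ℝ) : ℂ) := by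
  have hcpos : 0 < z.re := hz
  set f : ℕ → ℝ → ℂ := fun k x =>
    ((A ^ k / k.factorial : ℝ) : ℂ) * (((x ^ (α * k) : ℝ) : ℂ) * Complex.exp (-(z * x))) with hf
  have hαk : ∀ k : ℕ, (0:ℝ) ≤ α * k := fun k => by positivity
  have hmeas : ∀ k : ℕ, AEStronglyMeasurable (f k) (volume.restrict (Ioi (0:ℝ))) := fun k =>
    ((continuous_const.mul (contAux (hαk k) z)).aestronglyMeasurable).restrict
  have hint : ∀ k : ℕ, IntegrableOn (f k) (Ioi (0:ℝ)) := fun k =>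
    (cIntAux (hαk k) hz).const_mul _
  -- the value of each norm-integral
  set J : ℕ → ℝ := fun k => (A ^ k / k.factorial) * ((1/z.re) ^ (α * k + 1) * Real.Gamma (α * k + 1))
    with hJ
  have hnormint : ∀ k : ℕ, ∫ x in Ioi (0:ℝ), ‖f k x‖ = J k := by
    intro k
    have h1 : ∀ x ∈ Ioi (0:ℝ), ‖f k x‖ = (A ^ k / k.factorial) * (x ^ (α*k) * Real.exp (-(z.re * x))) := by
      intro x hx
      simp only [hf]
      rw [norm_mul, normAux z hx]
      congr 1
      rw [Complex.norm_real, Real.norm_eq_abs,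
        _root_.abs_of_nonneg (by positivity : (0:ℝ) ≤ A ^ k / k.factorial)]
    rw [setIntegral_congr_fun measurableSet_Ioi h1, integral_const_mul]
    simp only [hJ]
    congr 1
    have h2 := Real.integral_rpow_mul_exp_neg_mul_Ioi
      (by positivity : (0:ℝ) < α * k + 1) hcpos
    simpa using h2
  have hJsum : Summable J := by
    have hr : (0:ℝ) ≤ A * (1/z.re) ^ α := by positivity
    apply Summable.congr ((summableAux hα hα1 hr).mul_left (1/z.re))
    intro k
    simp only [hJ]
    have h3 : (1/z.re) ^ (α * k + 1) = ((1/z.re) ^ α) ^ k * (1/z.re) := by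
      rw [Real.rpow_add (by positivity), Real.rpow_one]
      congr 1
      rw [← Real.rpow_natCast ((1/z.re) ^ α) k, ← Real.rpow_mul (by positivity)]
    rw [h3, mul_pow]
    field_simp
  have hJnn : ∀ k, 0 ≤ J k := by
    intro k
    have := Real.Gamma_pos_of_pos (by positivity : (0:ℝ) < α * k + 1)
    simp only [hJ]
    positivity
  -- swap sum and integral
  have hswap := integral_tsum (μ := volume.restrict (Ioi (0:ℝ))) hmeas (by
    have heq : ∀ k : ℕ, ∫⁻ x in Ioi (0:ℝ), ‖f k x‖ₑ = ENNReal.ofReal (J k) := by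
      intro k
      rw [← ofReal_integral_norm_eq_lintegral_enorm (hint k), hnormint k]
    rw [funext heq] at *
    rw [← ENNReal.ofReal_tsum_of_nonneg hJnn hJsum]
    exact ENNReal.ofReal_ne_top)
  -- identify pointwise sum with integrand
  have hpt : ∀ x ∈ Ioi (0:ℝ), ∑' k : ℕ, f k x
      = ((Real.exp (A * x ^ α) : ℝ) : ℂ) * Complex.exp (-z * (x:ℂ)) := by
    intro x hx
    rw [mem_Ioi] at hx
    have h4 : ∀ k : ℕ, f k x = (((A * x ^ α) ^ k / k.factorial : ℝ) : ℂ)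
        * Complex.exp (-(z * x)) := by
      intro k
      simp only [hf]
      have : x ^ (α * k) = (x ^ α) ^ k := by
        rw [← Real.rpow_natCast (x ^ α) k, ← Real.rpow_mul hx.le]
      push_cast [this, mul_pow]
      ring
    simp_rw [h4]
    rw [tsum_mul_right]
    congr 1
    · rw [← Complex.ofReal_tsum]
      congr 1
      rw [Real.exp_eq_exp_ℝ, NormedSpace.exp_eq_tsum_div]
    · rw [neg_mul]
  rw [← setIntegral_congr_fun measurableSet_Ioi hpt, hswap]
  congr 1
  funext k
  simp only [hf]
  rw [integral_const_mul, lemH (hαk k) hz]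
  push_cast
  ring


theorem stmt17 (A : ℝ) (hA : 0 < A) (α : ℝ) (hα : 0 < α) (hα1 : α < 1) :
    (∀ t : ℝ, 0 < t →
      Summable (fun k : ℕ => (A / t ^ α) ^ k * (Real.Gamma (α * k + 1) / Real.Gamma (k + 1))) ∧
      ∫ x in Set.Ioi (0:ℝ), Real.exp (A * x ^ α - t * x)
        = (1 / t) * ∑' k : ℕ, (A / t ^ α) ^ k * (Real.Gamma (α * k + 1) / Real.Gamma (k + 1))) ∧
    (∀ δ > (0:ℝ), ∃ M : ℝ, ∀ z : ℂ, 0 < z.re → δ ≤ ‖z‖ →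
      ‖∫ x in Set.Ioi (0:ℝ), ((Real.exp (A * x ^ α) : ℝ) : ℂ) * Complex.exp (-z * (x : ℂ))‖ ≤ M) := by
  constructor
  · intro t ht
    have hGfact : ∀ k : ℕ, Real.Gamma ((k:ℝ) + 1) = (k.factorial : ℝ) :=
      fun k => Real.Gamma_nat_eq_factorial k
    have hsum0 := summableAux hα hα1 (r := A / t ^ α) (by positivity)
    have hsum : Summable (fun k : ℕ =>
        (A / t ^ α) ^ k * (Real.Gamma (α * k + 1) / Real.Gamma (k + 1))) := by
      apply hsum0.congr
      intro k
      rw [hGfact k]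
    refine ⟨hsum, ?_⟩
    have htc : (0:ℝ) < ((t:ℂ)).re := by simpa using ht
    have hm := master hA hα hα1 htc
    have hL : ∫ x in Ioi (0:ℝ), ((Real.exp (A * x ^ α) : ℝ) : ℂ) * Complex.exp (-(t:ℂ) * x)
        = ((∫ x in Ioi (0:ℝ), Real.exp (A * x ^ α - t * x) : ℝ) : ℂ) := by
      have h1 : ∀ x : ℝ, ((Real.exp (A * x ^ α) : ℝ) : ℂ) * Complex.exp (-(t:ℂ) * x)
          = ((Real.exp (A * x ^ α - t * x) : ℝ) : ℂ) := by
        intro x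
        rw [Complex.ofReal_exp, Complex.ofReal_exp, ← Complex.exp_add]
        congr 1
        push_cast
        ring
      simp_rw [h1]
      exact integral_ofReal
    have hR : ∀ k : ℕ, ((A ^ k / k.factorial * Real.Gamma (α * k + 1) : ℝ) : ℂ)
        * (t:ℂ) ^ ((-(α * k + 1) : ℝ) : ℂ)
        = ((A ^ k / k.factorial * Real.Gamma (α * k + 1) * t ^ (-(α * k + 1)) : ℝ) : ℂ) := by
      intro k
      rw [← Complex.ofReal_cpow ht.le, ← Complex.ofReal_mul]
    simp_rw [hR] at hm
    rw [← Complex.ofReal_tsum] at hm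
    rw [hL] at hm
    have hreal : ∫ x in Ioi (0:ℝ), Real.exp (A * x ^ α - t * x)
        = ∑' k : ℕ, A ^ k / k.factorial * Real.Gamma (α * k + 1) * t ^ (-(α * k + 1)) := by
      exact_mod_cast hm
    rw [hreal]
    have hterm : ∀ k : ℕ, A ^ k / k.factorial * Real.Gamma (α * k + 1) * t ^ (-(α * k + 1))
        = (1 / t) * ((A / t ^ α) ^ k * (Real.Gamma (α * k + 1) / Real.Gamma ((k:ℝ) + 1))) := by
      intro k
      rw [hGfact k]
      have h6 : t ^ (-(α * k + 1)) = ((t ^ α) ^ k)⁻¹ * t⁻¹ := by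
        rw [show -(α * (k:ℝ) + 1) = (-(α * k)) + (-1) by ring, Real.rpow_add ht,
          Real.rpow_neg_one, Real.rpow_neg ht.le, ← Real.rpow_natCast (t ^ α) k,
          ← Real.rpow_mul ht.le]
      rw [h6, div_pow]
      have h7 : (0:ℝ) < (t ^ α) ^ k := by positivity
      have h8 : (0:ℝ) < (k.factorial : ℝ) := by positivity
      field_simp
    rw [tsum_congr hterm, tsum_mul_left]
  · intro δ hδ
    set b : ℕ → ℝ := fun k =>
      A ^ k / k.factorial * Real.Gamma (α * k + 1) * (1/δ) ^ (α * k + 1) with hb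
    have hδeq : ∀ y : ℝ, (1/δ) ^ y = δ ^ (-y) := by
      intro y
      rw [Real.rpow_neg hδ.le, one_div, Real.inv_rpow hδ.le]
    have hbsum : Summable b := by
      have hr : (0:ℝ) ≤ A * (1/δ) ^ α := by positivity
      apply Summable.congr ((summableAux hα hα1 hr).mul_left (1/δ))
      intro k
      simp only [hb]
      have h3 : (1/δ) ^ (α * k + 1) = ((1/δ) ^ α) ^ k * (1/δ) := by
        rw [Real.rpow_add (by positivity), Real.rpow_one]
        congr 1
        rw [← Real.rpow_natCast ((1/δ) ^ α) k, ← Real.rpow_mul (by positivity)]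
      rw [h3, mul_pow]
      field_simp
    refine ⟨∑' k, b k, ?_⟩
    intro z hzre hznorm
    rw [master hA hα hα1 hzre]
    have hnormle : ∀ k : ℕ, ‖((A ^ k / k.factorial * Real.Gamma (α * k + 1) : ℝ) : ℂ)
        * z ^ ((-(α * k + 1) : ℝ) : ℂ)‖ ≤ b k := by
      intro k
      rw [norm_mul, Complex.norm_real, Real.norm_eq_abs,
        Complex.norm_cpow_real]
      have hG := Real.Gamma_pos_of_pos (by positivity : (0:ℝ) < α * k + 1)
      rw [_root_.abs_of_nonneg (by positivity : (0:ℝ) ≤ A ^ k / k.factorial * Real.Gamma (α * k + 1))]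
      simp only [hb]
      apply mul_le_mul_of_nonneg_left _ (by positivity)
      rw [hδeq]
      apply Real.rpow_le_rpow_of_nonpos hδ
      · exact hznorm
      · have : (0:ℝ) ≤ α * k := by positivity
        linarith
    have hsnorm : Summable (fun k : ℕ => ‖((A ^ k / k.factorial * Real.Gamma (α * k + 1) : ℝ) : ℂ)
        * z ^ ((-(α * k + 1) : ℝ) : ℂ)‖) :=
      Summable.of_nonneg_of_le (fun k => norm_nonneg _) hnormle hbsum
    calc ‖∑' k : ℕ, ((A ^ k / k.factorial * Real.Gamma (α * k + 1) : ℝ) : ℂ)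
        * z ^ ((-(α * k + 1) : ℝ) : ℂ)‖
        ≤ ∑' k : ℕ, ‖((A ^ k / k.factorial * Real.Gamma (α * k + 1) : ℝ) : ℂ)
          * z ^ ((-(α * k + 1) : ℝ) : ℂ)‖ := norm_tsum_le_tsum_norm hsnorm
      _ ≤ ∑' k, b k := Summable.tsum_le_tsum hnormle hsnorm hbsum
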